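/- There exists an instance of the VM placement problem (with CPU, RAM, network demands each bounded by 1 per machine) in which a schedule using 2 machines has total busy time 20, while a schedule using 3 machines has total busy time 14; hence minimizing the number of machines does not minimize total busy time. -/

import Mathlib

open MeasureTheory Set Finset
open scoped Classical

/-- Starting times of the six VMs. -/
noncomputable def ts : Fin 6 → ℝ := ![0, 0, 0, 0, 0, 1]

/-- Durations of the six VMs. -/
noncomputable def dur : Fin 6 → ℝ := ![10, 2, 2, 2, 2, 9]

/-- CPU demands. -/
noncomputable def cpu : Fin 6 → ℝ := ![0.5, 0.5, 0.2, 0.2, 0.1, 0.5]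

/-- RAM demands. -/
noncomputable def ram : Fin 6 → ℝ := ![0.1, 0.5, 0.4, 0.4, 0.1, 0.5]

/-- Network demands. -/
noncomputable def net : Fin 6 → ℝ := ![0.2, 0.2, 0.2, 0.2, 0.1, 0.2]

/-- A schedule `f` on `m` machines is feasible if, at every time `t` and on every
machine `j`, the sums of active VMs' cpu, ram and net demands are each at most 1. -/
noncomputable def Feasible {m : ℕ} (f : Fin 6 → Fin m) : Prop :=
  ∀ (t : ℝ) (j : Fin m),
    (∑ i : Fin 6, if f i = j ∧ t ∈ Icc (ts i) (ts i + dur i) then cpu i else 0) ≤ 1 ∧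
    (∑ i : Fin 6, if f i = j ∧ t ∈ Icc (ts i) (ts i + dur i) then ram i else 0) ≤ 1 ∧
    (∑ i : Fin 6, if f i = j ∧ t ∈ Icc (ts i) (ts i + dur i) then net i else 0) ≤ 1

/-- Busy time of machine `j` under schedule `f`: measure of the union of the
intervals of the VMs assigned to `j`. -/
noncomputable def busyTime {m : ℕ} (f : Fin 6 → Fin m) (j : Fin m) : ℝ :=
  (volume (⋃ i ∈ {i : Fin 6 | f i = j}, Icc (ts i) (ts i + dur i))).toReal

/-- Total busy time of a schedule. -/
noncomputable def totalBusyTime {m : ℕ} (f : Fin 6 → Fin m) : ℝ :=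
  ∑ j, busyTime f j

lemma cons_val_five' {α : Type*} (x : α) (u : Fin 5 → α) : Matrix.vecCons x u 5 = u 4 := rfl

/-- The 2-machine schedule: VMs 1,3,4,5 on machine 0, VMs 2,6 on machine 1. -/
noncomputable def g2 : Fin 6 → Fin 2 := ![0, 1, 0, 0, 0, 1]

/-- The 3-machine schedule: VMs 1,6 on machine 0, VMs 2,5 on machine 1, VMs 3,4 on machine 2. -/
noncomputable def g3 : Fin 6 → Fin 3 := ![0, 1, 2, 2, 1, 0]

lemma g2_feasible : Feasible g2 := by
  intro t j
  fin_cases j <;>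
    refine ⟨?_, ?_, ?_⟩ <;>
    simp only [g2, ts, dur, cpu, ram, net, Fin.sum_univ_six, Fin.ext_iff, cons_val_five'] <;> simp <;>
    split_ifs <;> norm_num

lemma g3_feasible : Feasible g3 := by
  intro t j
  fin_cases j <;>
    refine ⟨?_, ?_, ?_⟩ <;>
    simp only [g3, ts, dur, cpu, ram, net, Fin.sum_univ_six, Fin.ext_iff, cons_val_five'] <;> simp <;>
    split_ifs <;> norm_num

lemma g2_union0 : (⋃ i ∈ {i : Fin 6 | g2 i = 0}, Icc (ts i) (ts i + dur i)) = Icc (0:ℝ) 10 := by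
  apply subset_antisymm
  · refine iUnion₂_subset fun i hi => ?_
    fin_cases i <;> simp only [Set.mem_setOf_eq, g2] at hi <;>
      first
        | exact absurd hi (by decide)
        | (apply Set.Icc_subset_Icc <;>
            norm_num [ts, dur, cons_val_five', Matrix.cons_val_zero, Matrix.cons_val_one,
              Matrix.head_cons, Fin.isValue])
  · refine subset_trans ?_ (subset_biUnion_of_mem (show (0:Fin 6) ∈ {i | g2 i = 0} from rfl))
    apply Set.Icc_subset_Icc <;> norm_num [ts, dur]

lemma g2_union1 : (⋃ i ∈ {i : Fin 6 | g2 i = 1}, Icc (ts i) (ts i + dur i)) = Icc (0:ℝ) 10 := by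
  apply subset_antisymm
  · refine iUnion₂_subset fun i hi => ?_
    fin_cases i <;> simp only [Set.mem_setOf_eq, g2] at hi <;>
      first
        | exact absurd hi (by decide)
        | (apply Set.Icc_subset_Icc <;>
            norm_num [ts, dur, cons_val_five', Matrix.cons_val_zero, Matrix.cons_val_one,
              Matrix.head_cons, Fin.isValue])
  · intro x hx
    simp only [Set.mem_Icc] at hx
    rcases le_or_gt x 1 with h1 | h1
    · refine mem_biUnion (show (1:Fin 6) ∈ {i | g2 i = 1} from rfl) ?_
      simp only [ts, dur, Set.mem_Icc, Matrix.cons_val_one, Matrix.head_cons, Matrix.cons_val_zero]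
      constructor <;> linarith [hx.1]
    · refine mem_biUnion (show (5:Fin 6) ∈ {i | g2 i = 1} from rfl) ?_
      simp only [ts, dur, Set.mem_Icc, cons_val_five']
      simp
      constructor <;> linarith [hx.2]

lemma g3_union0 : (⋃ i ∈ {i : Fin 6 | g3 i = 0}, Icc (ts i) (ts i + dur i)) = Icc (0:ℝ) 10 := by
  apply subset_antisymm
  · refine iUnion₂_subset fun i hi => ?_
    fin_cases i <;> simp only [Set.mem_setOf_eq, g3] at hi <;>
      first
        | exact absurd hi (by decide)
        | (apply Set.Icc_subset_Icc <;>
            norm_num [ts, dur, cons_val_five', Matrix.cons_val_zero, Matrix.cons_val_one,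
              Matrix.head_cons, Fin.isValue])
  · refine subset_trans ?_ (subset_biUnion_of_mem (show (0:Fin 6) ∈ {i | g3 i = 0} from rfl))
    apply Set.Icc_subset_Icc <;> norm_num [ts, dur]

lemma g3_union1 : (⋃ i ∈ {i : Fin 6 | g3 i = 1}, Icc (ts i) (ts i + dur i)) = Icc (0:ℝ) 2 := by
  apply subset_antisymm
  · refine iUnion₂_subset fun i hi => ?_
    fin_cases i <;> simp only [Set.mem_setOf_eq, g3] at hi <;>
      first
        | exact absurd hi (by decide)
        | (apply Set.Icc_subset_Icc <;>
            norm_num [ts, dur, cons_val_five', Matrix.cons_val_zero, Matrix.cons_val_one,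
              Matrix.head_cons, Fin.isValue])
  · refine subset_trans ?_ (subset_biUnion_of_mem (show (1:Fin 6) ∈ {i | g3 i = 1} from rfl))
    apply Set.Icc_subset_Icc <;> norm_num [ts, dur]

lemma g3_union2 : (⋃ i ∈ {i : Fin 6 | g3 i = 2}, Icc (ts i) (ts i + dur i)) = Icc (0:ℝ) 2 := by
  apply subset_antisymm
  · refine iUnion₂_subset fun i hi => ?_
    fin_cases i <;> simp only [Set.mem_setOf_eq, g3] at hi <;>
      first
        | exact absurd hi (by decide)
        | (apply Set.Icc_subset_Icc <;>
            norm_num [ts, dur, cons_val_five', Matrix.cons_val_zero, Matrix.cons_val_one,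
              Matrix.head_cons, Fin.isValue])
  · refine subset_trans ?_ (subset_biUnion_of_mem (show (2:Fin 6) ∈ {i | g3 i = 2} from rfl))
    apply Set.Icc_subset_Icc <;> norm_num [ts, dur, Matrix.cons_val_two, Matrix.tail_cons, Matrix.head_cons]

lemma g2_total : totalBusyTime g2 = 20 := by
  rw [totalBusyTime, Fin.sum_univ_two]
  unfold busyTime
  rw [g2_union0, g2_union1, Real.volume_Icc]
  norm_num

lemma g3_total : totalBusyTime g3 = 14 := by
  rw [totalBusyTime, Fin.sum_univ_three]
  unfold busyTime
  rw [g3_union0, g3_union1, g3_union2, Real.volume_Icc]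
  norm_num

theorem min_machines_not_min_busy_time :
    ∃ (f₂ : Fin 6 → Fin 2) (f₃ : Fin 6 → Fin 3),
      Feasible f₂ ∧ Feasible f₃ ∧
      totalBusyTime f₂ = 20 ∧ totalBusyTime f₃ = 14 ∧
      totalBusyTime f₃ < totalBusyTime f₂ := by
  exact ⟨g2, g3, g2_feasible, g3_feasible, g2_total, g3_total, by
    rw [g2_total, g3_total]; norm_num⟩
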